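/- Suppose X is a Baire space, E is an equivalence relation on X such that E-saturations of meager sets are meager, F is a generically ergodic subequivalence relation of E, and B ⊆ X is an F-invariant set with the Baire property whose complement is E-complete (i.e., the E-saturation of the complement is all of X). Then B is meager. -/

import Mathlib

theorem meager_of_generically_ergodic_complete_complement
    (X : Type) [TopologicalSpace X] [BaireSpace X]
    (E F : X → X → Prop) (hE : Equivalence E) (hF : Equivalence F)
    (hFE : ∀ a b, F a b → E a b)
    (hsat : ∀ M : Set X, IsMeagre M → IsMeagre {x | ∃ y ∈ M, E x y})
    (hergodic : ∀ A : Set X, (∀ a b, F a b → (a ∈ A ↔ b ∈ A)) →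
      BaireMeasurableSet A → IsMeagre A ∨ IsMeagre Aᶜ)
    (B : Set X) (hBinv : ∀ a b, F a b → (a ∈ B ↔ b ∈ B))
    (hBbp : BaireMeasurableSet B)
    (hcomplete : ∀ x : X, ∃ y, y ∉ B ∧ E x y) :
    IsMeagre B := by
  rcases hergodic B hBinv hBbp with h | h
  · exact h
  · have hmea := hsat _ h
    have huniv : {x | ∃ y ∈ Bᶜ, E x y} = Set.univ := by
      ext x
      simp only [Set.mem_setOf_eq, Set.mem_univ, iff_true]
      obtain ⟨y, hy, hxy⟩ := hcomplete x
      exact ⟨y, hy, hxy⟩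
    rw [huniv] at hmea
    have hdense : Dense ((Set.univ : Set X)ᶜ) :=
      dense_of_mem_residual (by rwa [IsMeagre] at hmea)
    have hempty : IsEmpty X := by
      rw [Set.compl_univ] at hdense
      by_contra hne
      rw [not_isEmpty_iff] at hne
      obtain ⟨x⟩ := hne
      have := hdense.closure_eq
      simp at this
      exact absurd (this ▸ Set.mem_univ x) (by simp)
    have : B = ∅ := Set.eq_empty_of_isEmpty B
    rw [this]
    exact IsMeagre.empty
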